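/- Let n, k be natural numbers and let f : ℝⁿ → ℝ be a continuous function for which there exist real polynomials p, q in n variables with q ≠ 0 and f(x) = p(x)/q(x) for every x with q(x) ≠ 0. Suppose that for each integer j with 1 ≤ j ≤ k there exists a continuous map G_j : ℝⁿ → (the space of continuous j-multilinear maps (ℝⁿ)^j → ℝ) such that G_j(x) equals the j-th iterated Fréchet derivative of f at x for every x with q(x) ≠ 0. Then f is of class C^k on all of ℝⁿ (and hence f is k-regulous). -/

import Mathlib

open MvPolynomial

section Aux

open Filter Set Metric Topology

universe u

variable {F : Type u} [NormedAddCommGroup F] [NormedSpace ℝ F]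

/-- If `φ` has derivative `ψ t` at every `t` in a punctured neighborhood of `a`, and `φ`, `ψ`
are continuous at `a`, then `φ` has derivative `ψ a` at `a`. -/
lemma hasDerivAt_of_nhdsNE {φ ψ : ℝ → F} {a : ℝ}
    (h : ∀ᶠ t in 𝓝[≠] a, HasDerivAt φ (ψ t) t)
    (hφ : ContinuousAt φ a) (hψ : ContinuousAt ψ a) : HasDerivAt φ (ψ a) a := by
  have hR : ∀ᶠ t in 𝓝[>] a, HasDerivAt φ (ψ t) t :=
    h.filter_mono (nhdsWithin_mono a fun t ht => ne_of_gt ht)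
  have hL : ∀ᶠ t in 𝓝[<] a, HasDerivAt φ (ψ t) t :=
    h.filter_mono (nhdsWithin_mono a fun t ht => ne_of_lt ht)
  have hRmem : {t : ℝ | HasDerivAt φ (ψ t) t} ∈ 𝓝[>] a := hR
  have hLmem : {t : ℝ | HasDerivAt φ (ψ t) t} ∈ 𝓝[<] a := hL
  have hdiff : DifferentiableOn ℝ φ {t : ℝ | HasDerivAt φ (ψ t) t} :=
    fun t ht => ht.differentiableAt.differentiableWithinAt
  have A : HasDerivWithinAt φ (ψ a) (Ici a) a := by
    apply hasDerivWithinAt_Ici_of_tendsto_deriv hdiff hφ.continuousWithinAt hRmem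
    have hten : Tendsto ψ (𝓝[>] a) (𝓝 (ψ a)) := hψ.tendsto.mono_left nhdsWithin_le_nhds
    apply hten.congr'
    filter_upwards [hR] with t ht using ht.deriv.symm
  have B : HasDerivWithinAt φ (ψ a) (Iic a) a := by
    apply hasDerivWithinAt_Iic_of_tendsto_deriv hdiff hφ.continuousWithinAt hLmem
    have hten : Tendsto ψ (𝓝[<] a) (𝓝 (ψ a)) := hψ.tendsto.mono_left nhdsWithin_le_nhds
    apply hten.congr'
    filter_upwards [hL] with t ht using ht.deriv.symm
  have := B.union A
  rw [Iic_union_Ici] at this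
  exact this.hasDerivAt univ_mem

/-- If `φ` has derivative `ψ t` away from a finite set, and `φ`, `ψ` are continuous, then
`φ` has derivative `ψ t` everywhere. -/
lemma hasDerivAt_of_finite_exceptions {φ ψ : ℝ → F} {S : Set ℝ} (hS : S.Finite)
    (h : ∀ t ∉ S, HasDerivAt φ (ψ t) t)
    (hφ : Continuous φ) (hψ : Continuous ψ) (t : ℝ) : HasDerivAt φ (ψ t) t := by
  by_cases ht : t ∈ S
  · refine hasDerivAt_of_nhdsNE ?_ hφ.continuousAt hψ.continuousAt
    have hclosed : IsClosed (S \ {t}) := (hS.subset diff_subset).isClosed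
    have hmem : (S \ {t})ᶜ ∈ 𝓝 t := hclosed.isOpen_compl.mem_nhds (by simp)
    filter_upwards [mem_nhdsWithin_of_mem_nhds hmem, self_mem_nhdsWithin] with u hu hne
    exact h u fun huS => hu ⟨huS, hne⟩
  · exact h t ht

/-- Evaluation of a multivariate polynomial is `C^∞`. -/
lemma contDiff_eval_mv {n : ℕ} (p : MvPolynomial (Fin n) ℝ) :
    ContDiff ℝ (⊤ : ℕ∞) fun x : Fin n → ℝ => eval x p := by
  induction p using MvPolynomial.induction_on with
  | C a => simpa using contDiff_const
  | add p q hp hq => simp only [eval_add]; exact hp.add hq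
  | mul_X p i hp =>
      simp only [eval_mul, eval_X]
      exact hp.mul (ContinuousLinearMap.proj (R := ℝ) (φ := fun _ : Fin n => ℝ) i).contDiff

/-- The complement of the zero set of a nonzero polynomial is dense. -/
lemma dense_nonzero {n : ℕ} {q : MvPolynomial (Fin n) ℝ} (hq : q ≠ 0) :
    Dense {x : Fin n → ℝ | eval x q ≠ 0} := by
  rw [dense_iff_inter_open]
  rintro V hV ⟨z₀, hz₀⟩
  by_contra h
  have hz : ∀ x ∈ V, eval x q = 0 := by
    intro x hx
    by_contra hxq
    exact h ⟨x, hx, hxq⟩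
  have hana : AnalyticOnNhd ℝ (fun x : Fin n → ℝ => eval x q) Set.univ :=
    AnalyticOnNhd.eval_continuousLinearMap (ContinuousLinearMap.id ℝ (Fin n → ℝ)) q
  have heq : Set.EqOn (fun x : Fin n → ℝ => eval x q) 0 Set.univ := by
    apply hana.eqOn_zero_of_preconnected_of_eventuallyEq_zero isPreconnected_univ
      (Set.mem_univ z₀)
    filter_upwards [hV.mem_nhds hz₀] with x hx using hz x hx
  exact hq (MvPolynomial.funext fun x => by simpa using heq (Set.mem_univ x))

/-- Evaluating `q` along the line `t ↦ x + t • v` as a one-variable polynomial. -/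
lemma eval_line {n : ℕ} (q : MvPolynomial (Fin n) ℝ) (x v : Fin n → ℝ) (t : ℝ) :
    Polynomial.eval t
        (MvPolynomial.aeval (fun i => Polynomial.C (x i) + Polynomial.C (v i) * Polynomial.X) q)
      = eval (x + t • v) q := by
  induction q using MvPolynomial.induction_on with
  | C a => simp
  | add p q hp hq => simp [hp, hq]
  | mul_X p i hp =>
      simp only [map_mul, Polynomial.eval_mul, hp, aeval_X, Polynomial.eval_add,
        Polynomial.eval_C, Polynomial.eval_mul, Polynomial.eval_X, eval_mul, eval_X,
        Pi.add_apply, Pi.smul_apply, smul_eq_mul]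
      ring

/-- Key step: if `g` is continuous, `G` is continuous, and `g` has derivative `G y` at every
point `y` where `q` does not vanish, then `g` has derivative `G x` everywhere. -/
lemma key_hasFDerivAt {n : ℕ} {q : MvPolynomial (Fin n) ℝ} (hq : q ≠ 0)
    {g : (Fin n → ℝ) → F} {G : (Fin n → ℝ) → (Fin n → ℝ) →L[ℝ] F}
    (hg : Continuous g) (hG : Continuous G)
    (hd : ∀ y, eval y q ≠ 0 → HasFDerivAt g (G y) y) (x : Fin n → ℝ) :
    HasFDerivAt g (G x) x := by
  rw [hasFDerivAt_iff_isLittleO_nhds_zero, Asymptotics.isLittleO_iff]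
  intro ε εpos
  obtain ⟨δ, δpos, hδ⟩ := Metric.continuousAt_iff.1 hG.continuousAt ε εpos
  have main : ∀ y ∈ Metric.ball x δ, ‖g y - g x - G x (y - x)‖ ≤ ε * ‖y - x‖ := by
    set T := {y : Fin n → ℝ | ‖g y - g x - G x (y - x)‖ ≤ ε * ‖y - x‖} with hTdef
    have hT : IsClosed T := by
      apply isClosed_le
      · exact ((hg.sub continuous_const).sub
          ((G x).continuous.comp (continuous_id.sub continuous_const))).norm
      · exact continuous_const.mul (continuous_id.sub continuous_const).norm
    have hsub : {y : Fin n → ℝ | eval y q ≠ 0} ∩ Metric.ball x δ ⊆ T := by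
      rintro y ⟨hyU, hyball⟩
      set v : Fin n → ℝ := y - x with hvdef
      have hvnorm : ‖v‖ < δ := by
        rw [hvdef, ← dist_eq_norm]; exact Metric.mem_ball.1 hyball
      set r : Polynomial ℝ :=
        MvPolynomial.aeval (fun i => Polynomial.C (x i) + Polynomial.C (v i) * Polynomial.X) q
        with hrdef
      have hrt : ∀ t : ℝ, r.eval t = eval (x + t • v) q := fun t => eval_line q x v t
      have hxy' : x + v = y := by rw [hvdef]; abel
      have hxy : x + (1 : ℝ) • v = y := by rw [one_smul]; exact hxy'
      have hr0 : r ≠ 0 := by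
        intro h0
        apply hyU
        rw [← hxy, ← hrt 1, h0, Polynomial.eval_zero]
      have hSfin : {t : ℝ | eval (x + t • v) q = 0}.Finite := by
        refine (Polynomial.finite_setOf_isRoot hr0).subset ?_
        intro t ht
        simp only [Set.mem_setOf_eq, Polynomial.IsRoot, hrt t]
        exact ht
      set φ : ℝ → F := fun t => g (x + t • v) - t • (G x v) with hφdef
      set ψ : ℝ → F := fun t => G (x + t • v) v - G x v with hψdef
      have hline : ∀ t : ℝ, HasDerivAt (fun t : ℝ => x + t • v) v t := fun t => by
        simpa using ((hasDerivAt_id t).smul_const v).const_add x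
      have hφd : ∀ t ∉ {t : ℝ | eval (x + t • v) q = 0}, HasDerivAt φ (ψ t) t := by
        intro t ht
        have h1 : HasDerivAt (fun t : ℝ => g (x + t • v)) (G (x + t • v) v) t :=
          (hd _ ht).comp_hasDerivAt t (hline t)
        have h2 : HasDerivAt (fun t : ℝ => t • (G x v)) (G x v) t := by
          simpa using (hasDerivAt_id t).smul_const (G x v)
        exact h1.sub h2
      have hlinec : Continuous (fun t : ℝ => x + t • v) :=
        continuous_const.add (continuous_id.smul continuous_const)
      have hφc : Continuous φ :=
        (hg.comp hlinec).sub (continuous_id.smul continuous_const)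
      have hψc : Continuous ψ :=
        (((hG.comp hlinec).clm_apply continuous_const)).sub continuous_const
      have hall : ∀ t, HasDerivAt φ (ψ t) t :=
        hasDerivAt_of_finite_exceptions hSfin hφd hφc hψc
      have bound : ∀ t ∈ Set.Ico (0 : ℝ) 1, ‖ψ t‖ ≤ ε * ‖v‖ := by
        intro t ht
        have hdist : dist (x + t • v) x < δ := by
          rw [dist_eq_norm]
          have h1 : ‖x + t • v - x‖ = |t| * ‖v‖ := by
            rw [add_sub_cancel_left, norm_smul, Real.norm_eq_abs]
          rw [h1]
          calc |t| * ‖v‖ ≤ 1 * ‖v‖ := by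
                apply mul_le_mul_of_nonneg_right _ (norm_nonneg v)
                rw [abs_le]; constructor <;> [linarith [ht.1]; linarith [ht.2.le]]
            _ = ‖v‖ := one_mul _
            _ < δ := hvnorm
        have hGnorm : ‖G (x + t • v) - G x‖ < ε := by
          have := hδ hdist
          rwa [dist_eq_norm] at this
        have : ψ t = (G (x + t • v) - G x) v := by
          rw [hψdef]; simp [ContinuousLinearMap.sub_apply]
        rw [this]
        calc ‖(G (x + t • v) - G x) v‖ ≤ ‖G (x + t • v) - G x‖ * ‖v‖ :=
              (G (x + t • v) - G x).le_opNorm v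
          _ ≤ ε * ‖v‖ := mul_le_mul_of_nonneg_right hGnorm.le (norm_nonneg v)
      have hmvt := norm_image_sub_le_of_norm_deriv_le_segment'
        (fun t ht => (hall t).hasDerivWithinAt) bound 1 (Set.right_mem_Icc.2 zero_le_one)
      have hφ1 : φ 1 = g y - G x v := by
        rw [hφdef]; simp only [one_smul]; rw [hxy']
      have hφ0 : φ 0 = g x := by rw [hφdef]; simp
      rw [hφ1, hφ0] at hmvt
      have : ‖g y - g x - G x v‖ ≤ ε * ‖v‖ := by
        have heq : g y - G x v - g x = g y - g x - G x v := by abel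
        calc ‖g y - g x - G x v‖ = ‖g y - G x v - g x‖ := by rw [heq]
          _ ≤ ε * ‖v‖ * (1 - 0) := hmvt
          _ = ε * ‖v‖ := by ring
      simpa [hTdef, hvdef] using this
    intro y hy
    have hyc : y ∈ closure ({y : Fin n → ℝ | eval y q ≠ 0} ∩ Metric.ball x δ) := by
      have hob : IsOpen (Metric.ball x δ) := Metric.isOpen_ball
      have h2 := (dense_nonzero hq).open_subset_closure_inter hob hy
      rwa [Set.inter_comm] at h2
    exact hT.closure_subset ((closure_mono hsub) hyc)
  filter_upwards [Metric.ball_mem_nhds (0 : Fin n → ℝ) δpos] with h hh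
  have hxh : x + h ∈ Metric.ball x δ := by
    rw [Metric.mem_ball, dist_eq_norm, add_sub_cancel_left]
    exact mem_ball_zero_iff.1 hh
  have := main (x + h) hxh
  simpa using this

/-- Main induction: continuous extension of all jets up to order `k` on the complement of the
zero set of `q` implies `C^k` smoothness. -/
lemma main_induction {n : ℕ} {q : MvPolynomial (Fin n) ℝ} (hq : q ≠ 0) (k : ℕ) :
    ∀ {F : Type u} [NormedAddCommGroup F] [NormedSpace ℝ F] {g : (Fin n → ℝ) → F},
      Continuous g → ContDiffOn ℝ (⊤ : ℕ∞) g {x | eval x q ≠ 0} →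
      (∀ j : ℕ, 1 ≤ j → j ≤ k →
        ∃ G : (Fin n → ℝ) → ContinuousMultilinearMap ℝ (fun _ : Fin j => (Fin n → ℝ)) F,
          Continuous G ∧ ∀ x, eval x q ≠ 0 → G x = iteratedFDeriv ℝ j g x) →
      ContDiff ℝ k g := by
  induction k with
  | zero =>
      intro F _ _ g hg _ _
      exact contDiff_zero.2 hg
  | succ k IH =>
      intro F _ _ g hg hsm hjet
      have hUopen : IsOpen {x : Fin n → ℝ | eval x q ≠ 0} :=
        isOpen_ne_fun (contDiff_eval_mv q).continuous continuous_const
      obtain ⟨G₁, hG₁c, hG₁⟩ := hjet 1 le_rfl (by omega)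
      set G' : (Fin n → ℝ) → (Fin n → ℝ) →L[ℝ] F :=
        fun x => continuousMultilinearCurryFin1 ℝ (Fin n → ℝ) F (G₁ x) with hG'def
      have hG'c : Continuous G' :=
        (continuousMultilinearCurryFin1 ℝ (Fin n → ℝ) F).continuous.comp hG₁c
      have hder : ∀ y, eval y q ≠ 0 → HasFDerivAt g (G' y) y := by
        intro y hy
        have hdy : DifferentiableAt ℝ g y :=
          ((hsm.differentiableOn (by simp)) y hy).differentiableAt
            (hUopen.mem_nhds hy)
        have hGy : G' y = fderiv ℝ g y := by
          rw [hG'def]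
          simp only
          rw [hG₁ y hy]
          ext v
          simp [iteratedFDeriv_one_apply, Fin.snoc]
        rw [hGy]
        exact hdy.hasFDerivAt
      have hall : ∀ x, HasFDerivAt g (G' x) x := key_hasFDerivAt hq hg hG'c hder
      have hDiff : Differentiable ℝ g := fun x => (hall x).differentiableAt
      have hfderiv : fderiv ℝ g = G' := funext fun x => (hall x).fderiv
      have hckd : ContDiff ℝ (k : ℕ) (fderiv ℝ g) := by
        apply IH
        · rw [hfderiv]; exact hG'c
        · exact hsm.fderiv_of_isOpen hUopen (by exact_mod_cast le_top)
        · intro j hj1 hjk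
          obtain ⟨G, hGc, hGeq⟩ := hjet (j + 1) (by omega) (by omega)
          refine ⟨fun x =>
              (continuousMultilinearCurryRightEquiv' ℝ j (Fin n → ℝ) F) (G x),
            (continuousMultilinearCurryRightEquiv' ℝ j (Fin n → ℝ) F).continuous.comp hGc, ?_⟩
          intro x hx
          show (continuousMultilinearCurryRightEquiv' ℝ j (Fin n → ℝ) F) (G x)
              = iteratedFDeriv ℝ j (fderiv ℝ g) x
          rw [hGeq x hx, iteratedFDeriv_succ_eq_comp_right]
          simp [Function.comp]
      have hgoal : ContDiff ℝ ((k : WithTop ℕ∞) + 1) g := by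
        rw [contDiff_succ_iff_fderiv]
        refine ⟨hDiff, ?_, hckd⟩
        intro h
        exfalso
        exact (by simp : (k : WithTop ℕ∞) ≠ ⊤) h
      have hcast : ((k + 1 : ℕ) : WithTop ℕ∞) = (k : WithTop ℕ∞) + 1 := by push_cast; ring
      rw [hcast]
      exact hgoal

end Aux

/-- A function `f : ℝⁿ → ℝ` is `k`-regulous if it is of class `C^k` on all of `ℝⁿ` and
agrees with a rational function: there are polynomials `p`, `q` with `q ≠ 0` and
`q(x) * f(x) = p(x)` for every `x`. -/
def IsRegulous (n k : ℕ) (f : (Fin n → ℝ) → ℝ) : Prop :=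
  ContDiff ℝ k f ∧ ∃ p q : MvPolynomial (Fin n) ℝ, q ≠ 0 ∧
    ∀ x : Fin n → ℝ, eval x q * f x = eval x p

/-- **Regulous functions, Théorème `thjkc0`**: a continuous rational function `f = p/q` on
`ℝⁿ` whose `k`-jet on the dense open set `{q ≠ 0}` extends continuously to `ℝⁿ` (each
iterated Fréchet derivative of order `1 ≤ j ≤ k` extends to a continuous family of
`j`-multilinear maps) is of class `C^k` on all of `ℝⁿ`, hence `k`-regulous. -/
theorem regulous_of_continuous_jet (n k : ℕ) (f : (Fin n → ℝ) → ℝ)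
    (hcont : Continuous f)
    (p q : MvPolynomial (Fin n) ℝ) (hq : q ≠ 0)
    (hpq : ∀ x : Fin n → ℝ, eval x q ≠ 0 → f x = eval x p / eval x q)
    (hjet : ∀ j : ℕ, 1 ≤ j → j ≤ k →
      ∃ G : (Fin n → ℝ) →
          ContinuousMultilinearMap ℝ (fun _ : Fin j => (Fin n → ℝ)) ℝ,
        Continuous G ∧
        ∀ x : Fin n → ℝ, eval x q ≠ 0 → G x = iteratedFDeriv ℝ j f x) :
    ContDiff ℝ k f ∧ IsRegulous n k f := by
  have hsmU : ContDiffOn ℝ (⊤ : ℕ∞) f {x : Fin n → ℝ | eval x q ≠ 0} := by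
    apply ContDiffOn.congr
      (((contDiff_eval_mv p).contDiffOn).div ((contDiff_eval_mv q).contDiffOn)
        (fun x hx => hx))
    exact fun x hx => hpq x hx
  have hck : ContDiff ℝ k f := main_induction hq k hcont hsmU hjet
  have hmul : ∀ x : Fin n → ℝ, eval x q * f x = eval x p := by
    have hCclosed : IsClosed {x : Fin n → ℝ | eval x q * f x = eval x p} :=
      isClosed_eq ((contDiff_eval_mv q).continuous.mul hcont) (contDiff_eval_mv p).continuous
    have hsub : {x : Fin n → ℝ | eval x q ≠ 0} ⊆ {x : Fin n → ℝ | eval x q * f x = eval x p} := by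
      intro x hx
      have := hpq x hx
      simp only [Set.mem_setOf_eq, this]
      rw [mul_comm, div_mul_cancel₀ _ hx]
    intro x
    have hx : x ∈ closure {x : Fin n → ℝ | eval x q ≠ 0} := dense_nonzero hq x
    have := closure_mono hsub hx
    rwa [hCclosed.closure_eq] at this
  exact ⟨hck, hck, p, q, hq, hmul⟩
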